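/- arXiv:2309.16411 — 2 statements merged into one kernel-verified Lean document; each statement's English description precedes it below -/
import Mathlib

section
/- Let G be a finite graph on n vertices. If every edge separator of G has size at least εn, then there exists a vertex subset U with |U| ≥ 2n/3 such that the induced subgraph G[U] is a (3/2)ε-expander. -/
open Finset

variable {V : Type*} [Fintype V] [DecidableEq V]

/-- Number of edges of `G` with one endpoint in `A` and the other in `W` (for disjoint `A`, `W`),
counted as ordered pairs, hence exactly once per edge. -/
def bdryTo (G : SimpleGraph V) [DecidableRel G.Adj] (A W : Finset V) : ℕ :=
  ((A ×ˢ W).filter fun p => G.Adj p.1 p.2).card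

/-- Number of boundary edges of `A` inside the induced subgraph `G[B]`:
edges of `G` with one endpoint in `A` and the other in `B \ A`. -/
def bdryIn (G : SimpleGraph V) [DecidableRel G.Adj] (B A : Finset V) : ℕ :=
  bdryTo G A (B \ A)

/-- The induced subgraph `G[U]` is an `ε`-expander: every `W ⊆ U` with `|W| ≤ |U|/2`
has at least `ε|W|` boundary edges inside `G[U]`. -/
def IsExpanderOn (G : SimpleGraph V) [DecidableRel G.Adj] (U : Finset V) (ε : ℝ) : Prop :=
  ∀ W ⊆ U, 2 * W.card ≤ U.card → ε * W.card ≤ (bdryIn G U W : ℝ)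

lemma bdryTo_mono_right (G : SimpleGraph V) [DecidableRel G.Adj] (A : Finset V)
    {W W' : Finset V} (hW : W' ⊆ W) : bdryTo G A W' ≤ bdryTo G A W :=
  Finset.card_le_card (Finset.filter_subset_filter _
    (Finset.product_subset_product (Finset.Subset.refl _) hW))

lemma bdryTo_union_le (G : SimpleGraph V) [DecidableRel G.Adj] (A B W : Finset V) :
    bdryTo G (A ∪ B) W ≤ bdryTo G A W + bdryTo G B W := by
  unfold bdryTo
  rw [Finset.union_product, Finset.filter_union]
  exact Finset.card_union_le _ _

lemma compl_sdiff_eq (U W : Finset V) (hW : W ⊆ U) : (U \ W)ᶜ = Uᶜ ∪ W := by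
  ext x
  simp only [Finset.mem_compl, Finset.mem_sdiff, Finset.mem_union, not_and, not_not]
  constructor
  · intro hx
    by_cases hxU : x ∈ U
    · exact Or.inr (hx hxU)
    · exact Or.inl hxU
  · rintro (hx | hx) hxU
    · exact absurd hxU hx
    · exact hx

lemma aux_step (G : SimpleGraph V) [DecidableRel G.Adj] (ε : ℝ) (hε : 0 < ε)
    (h : ∀ V₁ : Finset V, 3 * V₁.card ≤ 2 * Fintype.card V →
      3 * V₁ᶜ.card ≤ 2 * Fintype.card V →
      ε * Fintype.card V ≤ (bdryTo G V₁ V₁ᶜ : ℝ)) :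
    ∀ U : Finset V, 2 * Fintype.card V ≤ 3 * U.card →
      (bdryTo G Uᶜ U : ℝ) ≤ 3 / 2 * ε * Uᶜ.card →
      ∃ U' : Finset V, 2 * Fintype.card V ≤ 3 * U'.card ∧ IsExpanderOn G U' (3 / 2 * ε) := by
  intro U
  induction U using Finset.strongInduction with
  | _ U ih =>
    intro hcard hcut
    by_cases hexp : IsExpanderOn G U (3 / 2 * ε)
    · exact ⟨U, hcard, hexp⟩
    · -- get a sparse cut W
      rw [IsExpanderOn] at hexp
      push_neg at hexp
      obtain ⟨W, hWU, hWhalf, hWsparse⟩ := hexp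
      have hbdry : (bdryIn G U W : ℝ) < 3 / 2 * ε * W.card := hWsparse
      have hWpos : 0 < W.card := by
        by_contra hc
        push_neg at hc
        interval_cases hWc : W.card
        simp at hbdry
        nlinarith [Nat.cast_nonneg (α := ℝ) (bdryIn G U W)]
      have hWne : W.Nonempty := Finset.card_pos.mp hWpos
      set U' := U \ W with hU'
      have hssub : U' ⊂ U := Finset.sdiff_ssubset hWU hWne
      have hcomplU' : U'ᶜ = Uᶜ ∪ W := compl_sdiff_eq U W hWU
      have hdisj : Disjoint Uᶜ W := by
        rw [Finset.disjoint_left]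
        intro x hx hxW
        exact (Finset.mem_compl.mp hx) (hWU hxW)
      have hcardU' : U'ᶜ.card = Uᶜ.card + W.card := by
        rw [hcomplU', Finset.card_union_of_disjoint hdisj]
      -- new cut bound
      have hcut' : (bdryTo G U'ᶜ U' : ℝ) < 3 / 2 * ε * U'ᶜ.card := by
        have h1 : bdryTo G U'ᶜ U' ≤ bdryTo G Uᶜ U' + bdryTo G W U' := by
          rw [hcomplU']; exact bdryTo_union_le G Uᶜ W U'
        have h2 : bdryTo G Uᶜ U' ≤ bdryTo G Uᶜ U :=
          bdryTo_mono_right G Uᶜ (Finset.sdiff_subset)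
        have h3 : bdryTo G W U' = bdryIn G U W := rfl
        have h4 : (bdryTo G U'ᶜ U' : ℝ) ≤ (bdryTo G Uᶜ U : ℝ) + (bdryIn G U W : ℝ) := by
          have := h1.trans (Nat.add_le_add h2 (le_of_eq h3))
          exact_mod_cast this
        rw [hcardU']
        push_cast
        linarith
      -- size facts
      have hU'card : U'.card = U.card - W.card := Finset.card_sdiff_of_subset hWU
      have hU'big : Fintype.card V ≤ 3 * U'.card := by
        have h6 : 6 * U'.card = 6 * U.card - 6 * W.card := by omega
        omega
      by_cases hrec : 2 * Fintype.card V ≤ 3 * U'.card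
      · -- recurse
        exact ih U' hssub hrec hcut'.le
      · -- contradiction with h
        push_neg at hrec
        exfalso
        have hb1 : 3 * U'ᶜ.card ≤ 2 * Fintype.card V := by
          have := Finset.card_compl U'
          have hle : U'.card ≤ Fintype.card V := Finset.card_le_univ U'
          omega
        have hb2 : 3 * U'ᶜᶜ.card ≤ 2 * Fintype.card V := by
          rw [compl_compl]
          omega
        have := h U'ᶜ hb1 hb2
        rw [compl_compl] at this
        have hfin : 3 / 2 * ε * U'ᶜ.card ≤ ε * Fintype.card V := by
          have : (3 * U'ᶜ.card : ℝ) ≤ 2 * Fintype.card V := by exact_mod_cast hb1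
          nlinarith
        linarith

/-- If every edge separator of `G` (balanced bipartition) has at least `εn` crossing edges, then
some `U` with `|U| ≥ 2n/3` induces a `(3/2)ε`-expander. -/
theorem stmt1 (G : SimpleGraph V) [DecidableRel G.Adj] (ε : ℝ)
    (h : ∀ V₁ : Finset V, 3 * V₁.card ≤ 2 * Fintype.card V →
      3 * V₁ᶜ.card ≤ 2 * Fintype.card V →
      ε * Fintype.card V ≤ (bdryTo G V₁ V₁ᶜ : ℝ)) :
    ∃ U : Finset V, 2 * Fintype.card V ≤ 3 * U.card ∧ IsExpanderOn G U (3 / 2 * ε) := by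
  by_cases hε : 0 < ε
  · apply aux_step G ε hε h Finset.univ
    · rw [Finset.card_univ]; omega
    · simp [bdryTo]
  · push_neg at hε
    refine ⟨Finset.univ, by rw [Finset.card_univ]; omega, ?_⟩
    intro W hW hWc
    have h1 : (3 / 2 * ε) * W.card ≤ 0 := by
      have : (0 : ℝ) ≤ W.card := Nat.cast_nonneg _
      nlinarith
    exact h1.trans (Nat.cast_nonneg _)
end

section
/- Let G = (V,E) be a graph on n vertices, and let 0 < α ≤ 1/2. Suppose that every subset U ⊆ V with |U| ≤ αn satisfies |∂U|/|U| ≥ ε. Then there exists U ⊆ V with |U| ≥ (2/3)αn such that the induced subgraph G[U] is an ε/(4⌈log_{3/2}(1/α)⌉)-expander. -/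
open Finset

variable {V : Type*} [Fintype V] [DecidableEq V]
set_option linter.unusedSectionVars false

private lemma bdryTo_comm (G : SimpleGraph V) [DecidableRel G.Adj] (A B : Finset V) :
    bdryTo G A B = bdryTo G B A := by
  unfold bdryTo
  exact Finset.card_bij' (fun p _ => (p.2, p.1)) (fun p _ => (p.2, p.1))
    (fun a ha => by
      rw [mem_filter, mem_product] at ha ⊢
      exact ⟨⟨ha.1.2, ha.1.1⟩, ha.2.symm⟩)
    (fun a ha => by
      rw [mem_filter, mem_product] at ha ⊢
      exact ⟨⟨ha.1.2, ha.1.1⟩, ha.2.symm⟩)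
    (fun a ha => rfl) (fun a ha => rfl)

private lemma bdryTo_union_right (G : SimpleGraph V) [DecidableRel G.Adj] (A B C : Finset V)
    (h : Disjoint B C) : bdryTo G A (B ∪ C) = bdryTo G A B + bdryTo G A C := by
  unfold bdryTo
  have e1 : A ×ˢ (B ∪ C) = A ×ˢ B ∪ A ×ˢ C := by
    ext p; simp only [mem_product, mem_union]; tauto
  rw [e1, Finset.filter_union]
  apply Finset.card_union_of_disjoint
  simp only [Finset.disjoint_left, mem_filter, mem_product]
  rintro p ⟨⟨hpA, hpB⟩, -⟩ ⟨⟨-, hpC⟩, -⟩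
  exact Finset.disjoint_left.mp h hpB hpC

private lemma bdryTo_union_left (G : SimpleGraph V) [DecidableRel G.Adj] (A B C : Finset V)
    (h : Disjoint B C) : bdryTo G (B ∪ C) A = bdryTo G B A + bdryTo G C A := by
  rw [bdryTo_comm, bdryTo_union_right G A B C h, bdryTo_comm G A B, bdryTo_comm G A C]

private lemma idW (G : SimpleGraph V) [DecidableRel G.Adj] {W S : Finset V} (hWS : W ⊆ S) :
    bdryIn G Finset.univ W = bdryIn G S W + bdryTo G W (Finset.univ \ S) := by
  have e : (Finset.univ : Finset V) \ W = (S \ W) ∪ (Finset.univ \ S) := by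
    ext x
    simp only [Finset.mem_sdiff, Finset.mem_union, Finset.mem_univ, true_and]
    constructor
    · intro hx
      by_cases hxS : x ∈ S
      · exact Or.inl ⟨hxS, hx⟩
      · exact Or.inr hxS
    · rintro (⟨-, hx⟩ | hx)
      · exact hx
      · exact fun hxW => hx (hWS hxW)
  have hd : Disjoint (S \ W) (Finset.univ \ S) := by
    simp only [Finset.disjoint_left, Finset.mem_sdiff, Finset.mem_univ, true_and]
    tauto
  unfold bdryIn
  rw [e, bdryTo_union_right G W _ _ hd]

private lemma idS (G : SimpleGraph V) [DecidableRel G.Adj] {W S : Finset V} (hWS : W ⊆ S) :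
    bdryIn G Finset.univ S = bdryTo G W (Finset.univ \ S) + bdryTo G (S \ W) (Finset.univ \ S) := by
  have e : W ∪ (S \ W) = S := Finset.union_sdiff_of_subset hWS
  have hd : Disjoint W (S \ W) := Finset.disjoint_sdiff
  unfold bdryIn
  nth_rewrite 1 [← e]
  rw [bdryTo_union_left G _ _ _ hd]

private lemma idS' (G : SimpleGraph V) [DecidableRel G.Adj] {W S : Finset V} (hWS : W ⊆ S) :
    bdryIn G Finset.univ (S \ W) = bdryIn G S W + bdryTo G (S \ W) (Finset.univ \ S) := by
  have e : (Finset.univ : Finset V) \ (S \ W) = W ∪ (Finset.univ \ S) := by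
    ext x
    simp only [Finset.mem_sdiff, Finset.mem_union, Finset.mem_univ, true_and, not_and, not_not]
    constructor
    · intro hx
      by_cases hxS : x ∈ S
      · exact Or.inl (hx hxS)
      · exact Or.inr hxS
    · rintro (hx | hx)
      · intro _; exact hx
      · intro hxS; exact absurd hxS hx
  have hd : Disjoint W (Finset.univ \ S) := by
    simp only [Finset.disjoint_left, Finset.mem_sdiff, Finset.mem_univ, true_and]
    exact fun a ha h2 => h2 (hWS ha)
  unfold bdryIn
  rw [e, bdryTo_union_right G _ _ _ hd]
  congr 1
  exact bdryTo_comm G _ _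

private lemma keyineq (α ε : ℝ) (hα0 : 0 < α) (hα : α ≤ 1/2) (hε : 0 < ε) (k : ℕ)
    (hk : α * 2^k < 1) :
    2 * (ε / (4 * (⌈Real.logb (3/2) (1/α)⌉₊ : ℝ))) * ((k : ℝ) + 1) < ε := by
  have hL32 : 0 < Real.log (3/2) := Real.log_pos (by norm_num)
  have hL2 : Real.log (3/2) < Real.log 2 := Real.log_lt_log (by norm_num) (by norm_num)
  have hinv : (2:ℝ) ≤ 1/α := by rw [le_div_iff₀ hα0]; linarith
  have hx : Real.log 2 ≤ Real.log (1/α) := Real.log_le_log (by norm_num) hinv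
  have h2k : (2:ℝ)^k < 1/α := by rw [lt_div_iff₀ hα0]; nlinarith
  have hlp : Real.log ((2:ℝ)^k) = (k:ℝ) * Real.log 2 := by
    rw [Real.log_pow]
  have hkx : (k : ℝ) * Real.log 2 < Real.log (1/α) := by
    rw [← hlp]; exact Real.log_lt_log (by positivity) h2k
  have hTge : Real.log (1/α) / Real.log (3/2) ≤ (⌈Real.logb (3/2) (1/α)⌉₊ : ℝ) := by
    have h := Nat.le_ceil (Real.logb (3/2) (1/α))
    rwa [Real.logb] at h
  set T := (⌈Real.logb (3/2) (1/α)⌉₊ : ℝ) with hT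
  have hT0 : 0 < T :=
    lt_of_lt_of_le (div_pos (lt_of_lt_of_le (Real.log_pos (by norm_num)) hx) hL32) hTge
  have hmain : (k : ℝ) + 1 < 2 * T := by
    have h1 : Real.log (1/α) ≤ T * Real.log (3/2) := (div_le_iff₀ hL32).mp hTge
    have h2 : (k:ℝ) * Real.log (3/2) ≤ (k:ℝ) * Real.log 2 :=
      mul_le_mul_of_nonneg_left hL2.le (Nat.cast_nonneg k)
    nlinarith [hkx, hx, h1, h2, hL32]
  have heq : 2 * (ε / (4 * T)) * ((k:ℝ) + 1) = ε * (((k:ℝ) + 1) / (2 * T)) := by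
    field_simp; ring
  rw [heq]
  have h1 : ((k:ℝ) + 1) / (2 * T) < 1 := (div_lt_one (by linarith)).mpr hmain
  nlinarith [mul_lt_mul_of_pos_left h1 hε]

private lemma aux (G : SimpleGraph V) [DecidableRel G.Adj] (α ε : ℝ)
    (hα0 : 0 < α) (hα : α ≤ 1 / 2) (hε : 0 < ε)
    (h : ∀ U : Finset V, U.Nonempty → (U.card : ℝ) ≤ α * Fintype.card V →
      ε * U.card ≤ (bdryIn G Finset.univ U : ℝ)) :
    ∀ m : ℕ, ∀ S : Finset V, ∀ k : ℕ, S.card ≤ m →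
      α * Fintype.card V < S.card → (S.card : ℝ) * 2 ^ k ≤ Fintype.card V →
      (bdryIn G Finset.univ S : ℝ) ≤
        2 * (ε / (4 * (⌈Real.logb (3 / 2) (1 / α)⌉₊ : ℝ))) * k * S.card →
      ∃ U : Finset V, 2 / 3 * α * Fintype.card V ≤ (U.card : ℝ) ∧
        IsExpanderOn G U (ε / (4 * (⌈Real.logb (3 / 2) (1 / α)⌉₊ : ℝ))) := by
  intro m
  induction m with
  | zero =>
    intro S k h1 h2 _ _
    exfalso
    have h0 : (0:ℝ) ≤ α * Fintype.card V := by positivity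
    have : (0:ℝ) < S.card := lt_of_le_of_lt h0 h2
    rw [Nat.le_zero.mp h1] at this
    norm_num at this
  | succ m ih =>
    intro S k hm hcard hsize hbd
    set δ : ℝ := ε / (4 * (⌈Real.logb (3 / 2) (1 / α)⌉₊ : ℝ)) with hδdef
    -- basic facts
    have hn0 : (0:ℝ) < Fintype.card V := by
      have h0 : (0:ℝ) ≤ α * Fintype.card V := by positivity
      have h1 : (0:ℝ) < S.card := lt_of_le_of_lt h0 hcard
      have h2 : (S.card : ℝ) ≤ Fintype.card V := by
        exact_mod_cast Finset.card_le_univ S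
      linarith
    have hαk : α * 2 ^ k < 1 := by
      have h1 : α * (Fintype.card V) * 2 ^ k < (S.card : ℝ) * 2 ^ k :=
        mul_lt_mul_of_pos_right hcard (by positivity)
      nlinarith
    have hkey : 2 * δ * ((k : ℝ) + 1) < ε := keyineq α ε hα0 hα hε k hαk
    have hδ0 : 0 < δ := by
      have hc : 0 < ⌈Real.logb (3 / 2) (1 / α)⌉₊ := by
        rw [Nat.ceil_pos]
        apply Real.logb_pos (by norm_num)
        rw [lt_div_iff₀ hα0]; linarith
      have hc' : (0:ℝ) < (⌈Real.logb (3 / 2) (1 / α)⌉₊ : ℝ) := by exact_mod_cast hc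
      exact div_pos hε (by linarith)
    by_cases hexp : IsExpanderOn G S δ
    · refine ⟨S, ?_, hexp⟩
      have h0 : (0:ℝ) ≤ α * Fintype.card V := by positivity
      nlinarith
    -- get a violating set W
    unfold IsExpanderOn at hexp
    push_neg at hexp
    obtain ⟨W, hWS, hW2, hWb⟩ := hexp
    have hW0 : 0 < W.card := by
      rcases Nat.eq_zero_or_pos W.card with h0 | h0
      · exfalso
        rw [h0] at hWb
        simp only [Nat.cast_zero, mul_zero] at hWb
        exact absurd hWb (not_lt.mpr (Nat.cast_nonneg _))
      · exact h0
    have hWcS : W.card < S.card := by omega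
    have hWle : W.card ≤ S.card := hWcS.le
    -- cast identities
    have hcast : (((S \ W).card : ℝ)) = (S.card : ℝ) - W.card := by
      rw [Finset.card_sdiff_of_subset hWS, Nat.cast_sub hWle]
    have hidW : (bdryIn G Finset.univ W : ℝ) =
        (bdryIn G S W : ℝ) + (bdryTo G W (Finset.univ \ S) : ℝ) := by
      exact_mod_cast congrArg (Nat.cast (R := ℝ)) (idW G hWS)
    have hidS : (bdryIn G Finset.univ S : ℝ) =
        (bdryTo G W (Finset.univ \ S) : ℝ) + (bdryTo G (S \ W) (Finset.univ \ S) : ℝ) := by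
      exact_mod_cast congrArg (Nat.cast (R := ℝ)) (idS G hWS)
    have hidS' : (bdryIn G Finset.univ (S \ W) : ℝ) =
        (bdryIn G S W : ℝ) + (bdryTo G (S \ W) (Finset.univ \ S) : ℝ) := by
      exact_mod_cast congrArg (Nat.cast (R := ℝ)) (idS' G hWS)
    by_cases hcase : (bdryIn G Finset.univ W : ℝ) ≤ 2 * δ * ((k : ℝ) + 1) * W.card
    · -- recurse into W, with k+1
      by_cases hWα : (W.card : ℝ) ≤ α * Fintype.card V
      · exfalso
        have hh := h W (Finset.card_pos.mp hW0) hWα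
        have hlt : 2 * δ * ((k : ℝ) + 1) * W.card < ε * W.card :=
          mul_lt_mul_of_pos_right hkey (by exact_mod_cast hW0)
        linarith
      · push_neg at hWα
        apply ih W (k + 1) (by omega) hWα
        · have h2W : ((2 * W.card : ℕ) : ℝ) ≤ (S.card : ℝ) := by exact_mod_cast hW2
          calc (W.card : ℝ) * 2 ^ (k + 1) = (2 * W.card : ℕ) * 2 ^ k := by
                push_cast; ring
            _ ≤ (S.card : ℝ) * 2 ^ k := by
                apply mul_le_mul_of_nonneg_right h2W (by positivity)
            _ ≤ _ := hsize
        · push_cast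
          exact hcase
    · -- recurse into S \ W, same k
      push_neg at hcase
      have hbd' : (bdryIn G Finset.univ (S \ W) : ℝ) ≤ 2 * δ * k * ((S \ W).card) := by
        rw [hidS', hcast]
        rw [hidS] at hbd
        nlinarith [hWb, hcase, hbd]
      have hS'0 : 0 < (S \ W).card := by
        rw [Finset.card_sdiff_of_subset hWS]; omega
      by_cases hS'α : (((S \ W).card : ℝ)) ≤ α * Fintype.card V
      · exfalso
        have hh := h (S \ W) (Finset.card_pos.mp hS'0) hS'α
        have hk1 : 2 * δ * (k : ℝ) ≤ 2 * δ * ((k : ℝ) + 1) := by nlinarith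
        have hlt : 2 * δ * (k : ℝ) * ((S \ W).card : ℝ) < ε * ((S \ W).card : ℝ) := by
          have : 2 * δ * (k:ℝ) < ε := by linarith
          exact mul_lt_mul_of_pos_right this (by exact_mod_cast hS'0)
        linarith
      · push_neg at hS'α
        apply ih (S \ W) k ?_ hS'α ?_ hbd'
        · have : (S \ W).card < S.card := by
            rw [Finset.card_sdiff_of_subset hWS]; omega
          omega
        · have hle : (((S \ W).card : ℝ)) ≤ (S.card : ℝ) := by
            exact_mod_cast Finset.card_le_card (Finset.sdiff_subset)
          calc (((S \ W).card : ℝ)) * 2 ^ k ≤ (S.card : ℝ) * 2 ^ k :=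
                mul_le_mul_of_nonneg_right hle (by positivity)
            _ ≤ _ := hsize

/-- Expansion concentration: if every nonempty `U` with `|U| ≤ αn` satisfies `|∂U| ≥ ε|U|`, then
there is `U` with `|U| ≥ (2/3)αn` inducing an `ε/(4⌈log_{3/2}(1/α)⌉)`-expander. -/
theorem stmt2 (G : SimpleGraph V) [DecidableRel G.Adj] (α ε : ℝ)
    (hα0 : 0 < α) (hα : α ≤ 1 / 2)
    (h : ∀ U : Finset V, U.Nonempty → (U.card : ℝ) ≤ α * Fintype.card V →
      ε * U.card ≤ (bdryIn G Finset.univ U : ℝ)) :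
    ∃ U : Finset V, 2 / 3 * α * Fintype.card V ≤ (U.card : ℝ) ∧
      IsExpanderOn G U (ε / (4 * (⌈Real.logb (3 / 2) (1 / α)⌉₊ : ℝ))) := by
  rcases le_or_gt ε 0 with hε | hε
  · -- trivial case: the expansion constant is nonpositive, take U = univ
    refine ⟨Finset.univ, ?_, ?_⟩
    · rw [Finset.card_univ]
      have h0 : (0:ℝ) ≤ (Fintype.card V : ℝ) := Nat.cast_nonneg _
      nlinarith
    · intro W _ _
      have hd : ε / (4 * (⌈Real.logb (3 / 2) (1 / α)⌉₊ : ℝ)) ≤ 0 :=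
        div_nonpos_iff.mpr (Or.inr ⟨hε, by positivity⟩)
      have := mul_nonpos_iff.mpr (Or.inr ⟨hd, Nat.cast_nonneg W.card⟩)
      exact this.trans (Nat.cast_nonneg _)
  · rcases Nat.eq_zero_or_pos (Fintype.card V) with hn | hn
    · refine ⟨Finset.univ, ?_, ?_⟩
      · rw [hn]; simp
      · intro W hWU h2W
        have : W.card = 0 := by
          have hc := Finset.card_le_univ W
          rw [hn] at hc
          omega
        rw [this]
        simp
    · apply aux G α ε hα0 hα hε h (Fintype.card V) Finset.univ 0 (by rw [Finset.card_univ])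
      · rw [Finset.card_univ]
        have hn' : (1:ℝ) ≤ (Fintype.card V : ℝ) := by exact_mod_cast hn
        nlinarith
      · rw [Finset.card_univ]; norm_num
      · have : bdryIn G Finset.univ Finset.univ = 0 := by
          unfold bdryIn bdryTo
          simp
        rw [this]
        simp
end
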